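/- The function U(T) = T·(√((T+1)/(3T+1)) + i) is differentiable on (-1/3, ∞), and for every T ∈ (-1/3, ∞) its derivative satisfies Im U'(T) = 1 and Re U'(T) ≥ 1/√3. -/

import Mathlib

/-- `U(T) = T(√((T+1)/(3T+1)) + i)`. -/
noncomputable def Ufun (T : ℝ) : ℂ :=
  (T : ℂ) * ((Real.sqrt ((T + 1) / (3 * T + 1)) : ℂ) + Complex.I)

lemma Ufun_hasDerivAt {T : ℝ} (hT : -(1:ℝ)/3 < T) :
    HasDerivAt Ufun
      (((Real.sqrt ((T + 1) / (3 * T + 1)) +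
        T * ((1 / (2 * Real.sqrt ((T + 1) / (3 * T + 1)))) *
          ((1 * (3 * T + 1) - (T + 1) * 3) / (3 * T + 1) ^ 2)) : ℝ) : ℂ)
        + Complex.I) T := by
  have ha : (0:ℝ) < 3 * T + 1 := by linarith
  have hb : (0:ℝ) < T + 1 := by linarith
  have hfpos : (0:ℝ) < (T + 1) / (3 * T + 1) := div_pos hb ha
  have hf : HasDerivAt (fun t : ℝ => (t + 1) / (3 * t + 1))
      ((1 * (3 * T + 1) - (T + 1) * 3) / (3 * T + 1) ^ 2) T := by
    exact ((hasDerivAt_id T).add_const 1).div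
      (((hasDerivAt_id T).const_mul 3).add_const 1 |>.congr_deriv (by ring)) (ne_of_gt ha)
  have hg : HasDerivAt (fun t : ℝ => Real.sqrt ((t + 1) / (3 * t + 1)))
      ((1 / (2 * Real.sqrt ((T + 1) / (3 * T + 1)))) *
        ((1 * (3 * T + 1) - (T + 1) * 3) / (3 * T + 1) ^ 2)) T :=
    (Real.hasDerivAt_sqrt (ne_of_gt hfpos)).comp T hf
  have hh : HasDerivAt (fun t : ℝ => t * Real.sqrt ((t + 1) / (3 * t + 1)))
      (Real.sqrt ((T + 1) / (3 * T + 1)) +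
        T * ((1 / (2 * Real.sqrt ((T + 1) / (3 * T + 1)))) *
          ((1 * (3 * T + 1) - (T + 1) * 3) / (3 * T + 1) ^ 2))) T := by
    have := (hasDerivAt_id T).mul hg
    simpa [Pi.mul_def] using this
  have h1 : HasDerivAt (fun t : ℝ => ((t * Real.sqrt ((t + 1) / (3 * t + 1)) : ℝ) : ℂ))
      (((Real.sqrt ((T + 1) / (3 * T + 1)) +
        T * ((1 / (2 * Real.sqrt ((T + 1) / (3 * T + 1)))) *
          ((1 * (3 * T + 1) - (T + 1) * 3) / (3 * T + 1) ^ 2)) : ℝ) : ℂ)) T :=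
    hh.ofReal_comp
  have h2 : HasDerivAt (fun t : ℝ => ((t : ℂ) * Complex.I)) Complex.I T := by
    simpa using (Complex.ofRealCLM.hasDerivAt (x := T)).mul_const Complex.I
  have := h1.add h2
  convert this using 2 with t
  · rfl
  unfold Ufun
  funext t
  simp only [Pi.add_apply]
  push_cast
  ring

/-- `U` is differentiable on `(-1/3, ∞)` with `Im U'(T) = 1` and `Re U'(T) ≥ 1/√3`. -/
theorem Ufun_deriv_bounds :
    (∀ T ∈ Set.Ioi (-(1 : ℝ) / 3), DifferentiableAt ℝ Ufun T) ∧
    ∀ T ∈ Set.Ioi (-(1 : ℝ) / 3),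
      (deriv Ufun T).im = 1 ∧ 1 / Real.sqrt 3 ≤ (deriv Ufun T).re := by
  constructor
  · intro T hT
    exact (Ufun_hasDerivAt hT).differentiableAt
  · intro T hT
    rw [Set.mem_Ioi] at hT
    rw [(Ufun_hasDerivAt hT).deriv]
    constructor
    · simp only [Complex.add_im, Complex.ofReal_im, Complex.I_im, zero_add]
    · have ha : (0:ℝ) < 3 * T + 1 := by linarith
      have hb : (0:ℝ) < T + 1 := by linarith
      have hfpos : (0:ℝ) < (T + 1) / (3 * T + 1) := div_pos hb ha
      set s := Real.sqrt ((T + 1) / (3 * T + 1)) with hs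
      have hspos : 0 < s := Real.sqrt_pos.mpr hfpos
      have hs2 : s ^ 2 * (3 * T + 1) = T + 1 := by
        rw [hs, Real.sq_sqrt (le_of_lt hfpos)]
        field_simp
        exact div_self (ne_of_gt (by linarith))
      have h3 : (0:ℝ) < Real.sqrt 3 := Real.sqrt_pos.mpr (by norm_num)
      have h3sq : Real.sqrt 3 ^ 2 = 3 := Real.sq_sqrt (by norm_num)
      simp only [Complex.add_re, Complex.ofReal_re, Complex.I_re, add_zero]
      have hC : (0:ℝ) < 3 * T ^ 2 + 3 * T + 1 := by nlinarith [sq_nonneg (3*T+4/3)]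
      have hsq : ((3 * T + 1) ^ 2 * s) ^ 2 = (3 * T + 1) ^ 3 * (T + 1) := by
        linear_combination ((3 * T + 1) ^ 3) * hs2
      have key : (3 * T + 1) ^ 2 * s ≤ Real.sqrt 3 * (3 * T ^ 2 + 3 * T + 1) := by
        nlinarith [hsq, h3sq, sq_nonneg (3 * T + 4/3), mul_pos h3 hC,
          mul_pos (mul_pos (pow_pos ha 2) hspos) (mul_pos h3 hC),
          mul_pos (pow_pos ha 2) hspos]
      have hD : s + T * ((1 / (2 * s)) * ((1 * (3 * T + 1) - (T + 1) * 3) / (3 * T + 1) ^ 2))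
          = (3 * T ^ 2 + 3 * T + 1) / ((3 * T + 1) ^ 2 * s) := by
        rw [eq_div_iff (mul_pos (pow_pos ha 2) hspos).ne']
        have es : s⁻¹ * s = 1 := inv_mul_cancel₀ hspos.ne'
        have eA : ((3 * T + 1) ^ 2)⁻¹ * (3 * T + 1) ^ 2 = 1 := inv_mul_cancel₀ (pow_pos ha 2).ne'
        linear_combination (3 * T + 1) * hs2 + (T * (-2) / 2 * (((3 * T + 1) ^ 2)⁻¹ * (3 * T + 1) ^ 2)) * es + (T * (-2) / 2) * eA
      rw [hD, div_le_div_iff₀ h3 (mul_pos (pow_pos ha 2) hspos)]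
      linarith [key]
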